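/- arXiv:2303.04122 — 8 statements merged into one kernel-verified Lean document; each statement's English description precedes it below -/
import Mathlib

section
/- For every integer n ≥ 1 and k ≥ 1, with N = n + 1/2, the even-indexed power sums S_{2j} = Σ_{r=1}^{n} r^{2j} satisfy Σ_{j=1}^{k} 4^j · C(2k+1, 2j) · S_{2j} = 4^k · N^{2k+1} − N. -/
open Finset

lemma pair_sum (f : ℕ → ℚ) (m : ℕ) :
    ∑ i ∈ range (2 * m), f i = ∑ j ∈ range m, (f (2 * j) + f (2 * j + 1)) := by
  induction m with
  | zero => simp
  | succ m ih =>
    have h : 2 * (m + 1) = (2 * m + 1) + 1 := by ring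
    rw [h, Finset.sum_range_succ, Finset.sum_range_succ, ih, Finset.sum_range_succ]
    ring

lemma key (k : ℕ) (x : ℚ) :
    ∑ j ∈ range (k + 1), (4 : ℚ) ^ j * (Nat.choose (2 * k + 1) (2 * j)) * x ^ (2 * j)
      = 4 ^ k * ((x + 1 / 2) ^ (2 * k + 1) + (1 / 2 - x) ^ (2 * k + 1)) := by
  have h1 : (x + 1 / 2) ^ (2 * k + 1)
      = ∑ i ∈ range (2 * k + 1 + 1), x ^ i * (1 / 2 : ℚ) ^ (2 * k + 1 - i) *
          (Nat.choose (2 * k + 1) i) := add_pow x (1 / 2) (2 * k + 1)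
  have h2 : (1 / 2 - x) ^ (2 * k + 1)
      = ∑ i ∈ range (2 * k + 1 + 1), (-x) ^ i * (1 / 2 : ℚ) ^ (2 * k + 1 - i) *
          (Nat.choose (2 * k + 1) i) := by
    have := add_pow (-x) (1 / 2 : ℚ) (2 * k + 1)
    rw [← this]; ring_nf
  rw [h1, h2, ← Finset.sum_add_distrib]
  have h3 : 2 * k + 1 + 1 = 2 * (k + 1) := by ring
  rw [h3, pair_sum, Finset.mul_sum]
  apply Finset.sum_congr rfl
  intro j hj
  have hjk : j ≤ k := by simpa using Nat.lt_succ_iff.mp (Finset.mem_range.mp hj)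
  have hodd : (-x) ^ (2 * j + 1) = -(x ^ (2 * j + 1)) :=
    Odd.neg_pow ⟨j, by ring⟩ x
  have heven : (-x) ^ (2 * j) = x ^ (2 * j) :=
    Even.neg_pow (even_two_mul j) x
  rw [hodd, heven]
  have hsub : 2 * k + 1 - 2 * j = 2 * (k - j) + 1 := by omega
  rw [hsub]
  have h4 : ((1 : ℚ) / 2) ^ (2 * (k - j) + 1) = 1 / (4 ^ (k - j) * 2) := by
    rw [div_pow, one_pow, pow_succ, pow_mul]
    norm_num
  rw [h4]
  have h5 : (4 : ℚ) ^ k = 4 ^ j * 4 ^ (k - j) := by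
    rw [← pow_add]; congr 1; omega
  have h6 : (4 : ℚ) ^ (k - j) ≠ 0 := by positivity
  rw [h5]
  field_simp
  ring

theorem stmt_0 (n k : ℕ) (hn : 1 ≤ n) (hk : 1 ≤ k) :
    ∑ j ∈ Finset.Icc 1 k, (4 : ℚ) ^ j * (Nat.choose (2 * k + 1) (2 * j)) *
      (∑ r ∈ Finset.Icc 1 n, (r : ℚ) ^ (2 * j)) =
    4 ^ k * ((n : ℚ) + 1 / 2) ^ (2 * k + 1) - ((n : ℚ) + 1 / 2) := by
  clear hn
  induction n with
  | zero =>
    have h0 : Finset.Icc 1 0 = (∅ : Finset ℕ) := rfl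
    rw [h0]
    simp only [Finset.sum_empty, mul_zero, Finset.sum_const_zero, Nat.cast_zero, zero_add]
    have key4 : (4 : ℚ) ^ k * ((1 : ℚ) / 2) ^ (2 * k + 1) = 1 / 2 := by
      rw [div_pow, one_pow, pow_succ, pow_mul]
      norm_num
      field_simp
    rw [key4]
    norm_num
  | succ n ih =>
    have hstep : ∀ j ∈ Finset.Icc 1 k,
        (∑ r ∈ Finset.Icc 1 (n + 1), (r : ℚ) ^ (2 * j))
          = (∑ r ∈ Finset.Icc 1 n, (r : ℚ) ^ (2 * j)) + ((n : ℚ) + 1) ^ (2 * j) := by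
      intro j _
      rw [Finset.sum_Icc_succ_top (by omega)]
      push_cast; ring
    rw [Finset.sum_congr rfl (fun j hj => by rw [hstep j hj])]
    simp only [mul_add, Finset.sum_add_distrib]
    rw [ih]
    -- remaining: Σ_{j=1}^k 4^j C x^{2j} with x = n+1
    have hx := key k ((n : ℚ) + 1)
    rw [Finset.range_eq_Ico, Finset.sum_eq_sum_Ico_succ_bot (by omega : 0 < k + 1)] at hx
    have hIcc : Finset.Ico 1 (k + 1) = Finset.Icc 1 k := rfl
    rw [hIcc] at hx
    simp only [pow_zero, mul_zero, Nat.choose_zero_right, Nat.cast_one, mul_one, one_mul] at hx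
    have h2 : ((1 : ℚ) / 2 - ((n : ℚ) + 1)) ^ (2 * k + 1)
        = -(((n : ℚ) + 1 / 2) ^ (2 * k + 1)) := by
      have : (1 : ℚ) / 2 - ((n : ℚ) + 1) = -((n : ℚ) + 1 / 2) := by ring
      rw [this, neg_pow]
      simp [pow_succ, pow_mul]
    rw [h2] at hx
    have hx' : ∑ j ∈ Finset.Icc 1 k, (4 : ℚ) ^ j * (Nat.choose (2 * k + 1) (2 * j)) *
        ((n : ℚ) + 1) ^ (2 * j)
        = 4 ^ k * ((((n : ℚ) + 1) + 1 / 2) ^ (2 * k + 1) - ((n : ℚ) + 1 / 2) ^ (2 * k + 1)) - 1 := by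
      linarith [hx]
    rw [hx']
    push_cast
    ring
end

section
/- For every integer n ≥ 1 and k ≥ 1, with N = n + 1/2, the odd-indexed power sums S_{2j−1} = Σ_{r=1}^{n} r^{2j−1} satisfy Σ_{j=1}^{k} 4^j · C(2k, 2j−1) · S_{2j−1} = 4^k · N^{2k} − 1. -/
open Finset

lemma odd_sum (F : ℕ → ℚ) (k : ℕ) (h : ∀ i, Even i → F i = 0) :
    ∑ i ∈ Finset.range (2*k+1), F i = ∑ i ∈ Finset.range k, F (2*i+1) := by
  induction k with
  | zero => simpa using h 0 Even.zero
  | succ k ih =>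
    have e : 2*(k+1)+1 = (2*k+1) + 1 + 1 := by ring
    rw [e, Finset.sum_range_succ, Finset.sum_range_succ, ih, Finset.sum_range_succ,
        h (2*k+1+1) ⟨k+1, by ring⟩]
    ring

lemma lemA (x : ℚ) (k : ℕ) :
    (x+1)^(2*k) - (x-1)^(2*k)
      = ∑ j ∈ Finset.Icc 1 k, 2 * ((Nat.choose (2*k) (2*j-1)) : ℚ) * x^(2*j-1) := by
  have h1 : (x+1)^(2*k) - (x-1)^(2*k)
      = ∑ i ∈ Finset.range (2*k+1),
          x^i * ((Nat.choose (2*k) i) : ℚ) * (1 - (-1)^(2*k-i)) := by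
    have e2 : (x-1)^(2*k) = (x + (-1))^(2*k) := by ring_nf
    rw [add_pow, e2, add_pow, ← Finset.sum_sub_distrib]
    exact Finset.sum_congr rfl (fun i _ => by ring)
  rw [h1, odd_sum _ k (fun i hi => by
    rcases le_or_gt i (2*k) with h | h
    · have : Even (2*k - i) := (Nat.even_sub h).mpr (by simp [hi, Nat.even_mul])
      rw [this.neg_one_pow]; ring
    · simp [Nat.choose_eq_zero_of_lt h])]
  rw [← Finset.Ico_add_one_right_eq_Icc, Finset.sum_Ico_eq_sum_range, Nat.add_sub_cancel]
  apply Finset.sum_congr (by simp) (fun i hi => ?_)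
  have e3 : 2*(1+i)-1 = 2*i+1 := by omega
  have e4 : Odd (2*k - (2*i+1)) := by
    simp only [Finset.mem_range] at hi
    refine Nat.Even.sub_odd (by omega) ⟨k, by ring⟩ (by exact ⟨i, by ring⟩)
  rw [e3, e4.neg_one_pow]
  ring

theorem stmt_1 (n k : ℕ) (hn : 1 ≤ n) (hk : 1 ≤ k) :
    ∑ j ∈ Finset.Icc 1 k, (4 : ℚ) ^ j * (Nat.choose (2 * k) (2 * j - 1)) *
      (∑ r ∈ Finset.Icc 1 n, (r : ℚ) ^ (2 * j - 1)) =
    4 ^ k * ((n : ℚ) + 1 / 2) ^ (2 * k) - 1 := by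
  have key : ∀ r : ℕ, 1 ≤ r →
      ∑ j ∈ Finset.Icc 1 k, (4 : ℚ) ^ j * (Nat.choose (2 * k) (2 * j - 1)) * (r : ℚ) ^ (2 * j - 1)
        = (2*(r:ℚ)+1)^(2*k) - (2*(r:ℚ)-1)^(2*k) := by
    intro r hr
    rw [lemA (2*(r:ℚ)) k]
    apply Finset.sum_congr rfl (fun j hj => ?_)
    simp only [Finset.mem_Icc] at hj
    rw [mul_pow]
    have : (2:ℚ) * 2^(2*j-1) = 4^j := by
      rw [← pow_succ']
      have : 2*j-1+1 = 2*j := by omega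
      rw [this, pow_mul]; norm_num
    calc (4:ℚ)^j * (Nat.choose (2*k) (2*j-1)) * (r:ℚ)^(2*j-1)
        = (2 * 2^(2*j-1)) * (Nat.choose (2*k) (2*j-1)) * (r:ℚ)^(2*j-1) := by rw [this]
      _ = 2 * ((Nat.choose (2*k) (2*j-1)):ℚ) * (2^(2*j-1) * (r:ℚ)^(2*j-1)) := by ring
  have swap : ∑ j ∈ Finset.Icc 1 k, (4 : ℚ) ^ j * (Nat.choose (2 * k) (2 * j - 1)) *
      (∑ r ∈ Finset.Icc 1 n, (r : ℚ) ^ (2 * j - 1))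
      = ∑ r ∈ Finset.Icc 1 n, ∑ j ∈ Finset.Icc 1 k,
          (4 : ℚ) ^ j * (Nat.choose (2 * k) (2 * j - 1)) * (r : ℚ) ^ (2 * j - 1) := by
    rw [Finset.sum_comm]
    exact Finset.sum_congr rfl (fun j _ => by rw [Finset.mul_sum])
  rw [swap]
  have tel : ∑ r ∈ Finset.Icc 1 n, ((2*(r:ℚ)+1)^(2*k) - (2*(r:ℚ)-1)^(2*k))
      = (2*(n:ℚ)+1)^(2*k) - 1 := by
    have := Finset.sum_range_sub (fun i : ℕ => (2*(i:ℚ)+1)^(2*k)) n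
    rw [← Finset.Ico_add_one_right_eq_Icc, Finset.sum_Ico_eq_sum_range, Nat.add_sub_cancel]
    have h2 : ∀ i ∈ Finset.range n, (2*((1+i:ℕ):ℚ)+1)^(2*k) - (2*((1+i:ℕ):ℚ)-1)^(2*k)
        = (2*((i+1:ℕ):ℚ)+1)^(2*k) - (2*((i:ℕ):ℚ)+1)^(2*k) := fun i _ => by push_cast; ring_nf
    rw [Finset.sum_congr rfl h2, this]
    norm_num
  rw [Finset.sum_congr rfl (fun r hr => key r (Finset.mem_Icc.mp hr).1), tel]
  have : (2*(n:ℚ)+1) = 2 * ((n:ℚ) + 1/2) := by ring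
  rw [this, mul_pow, pow_mul]
  norm_num
end

section
/- For every integer n ≥ 1 and k ≥ 1, Σ_{j=1}^{k} 4^j · C(2k+1, 2j) · S_{2j} = (n + 1/2) · Σ_{j=1}^{k} 4^j · C(2k, 2j−1) · S_{2j−1}, where S_m = Σ_{r=1}^{n} r^m. -/
open Finset

lemma parity_expand (m : ℕ) (x : ℚ) :
    (x+1)^m + (1-x)^m = ∑ i ∈ range (m+1), (if Even i then 2 * (m.choose i : ℚ) * x^i else 0) := by
  rw [show (1 - x) = (-x) + 1 by ring, add_pow, add_pow, ← Finset.sum_add_distrib]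
  refine Finset.sum_congr rfl fun i _ => ?_
  rcases Nat.even_or_odd i with h | h
  · rw [if_pos h, h.neg_pow]; ring
  · rw [if_neg (Nat.not_even_iff_odd.mpr h), h.neg_pow]; ring

lemma parity_expand' (m : ℕ) (x : ℚ) :
    (x+1)^m - (1-x)^m = ∑ i ∈ range (m+1), (if Even i then 0 else 2 * (m.choose i : ℚ) * x^i) := by
  rw [show (1 - x) = (-x) + 1 by ring, add_pow, add_pow, ← Finset.sum_sub_distrib]
  refine Finset.sum_congr rfl fun i _ => ?_
  rcases Nat.even_or_odd i with h | h
  · rw [if_pos h, h.neg_pow]; ring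
  · rw [if_neg (Nat.not_even_iff_odd.mpr h), h.neg_pow]; ring

lemma sum_even_part (k : ℕ) (x : ℚ) :
    2 * ∑ j ∈ range (k+1), (((2*k+1).choose (2*j) : ℚ)) * x^(2*j)
      = (x+1)^(2*k+1) + (1-x)^(2*k+1) := by
  rw [parity_expand, Finset.sum_ite, Finset.sum_const_zero, add_zero, Finset.mul_sum]
  refine Finset.sum_nbij' (fun j => 2*j) (fun i => i/2) ?_ ?_ ?_ ?_ ?_
  · intro a ha
    simp only [mem_filter, mem_range] at *
    exact ⟨by omega, ⟨a, by ring⟩⟩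
  · intro a ha
    simp only [mem_filter, mem_range] at *
    obtain ⟨h1, c, hc⟩ := ha
    omega
  · intro a _; omega
  · intro a ha
    simp only [mem_filter, mem_range] at ha
    obtain ⟨h1, c, hc⟩ := ha
    omega
  · intro a _; ring

lemma sum_odd_part (k : ℕ) (x : ℚ) :
    2 * ∑ j ∈ range k, (((2*k).choose (2*j+1) : ℚ)) * x^(2*j+1)
      = (x+1)^(2*k) - (1-x)^(2*k) := by
  rw [parity_expand', Finset.sum_ite, Finset.sum_const_zero, zero_add, Finset.mul_sum]
  refine Finset.sum_nbij' (fun j => 2*j+1) (fun i => i/2) ?_ ?_ ?_ ?_ ?_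
  · intro a ha
    simp only [mem_filter, mem_range] at *
    exact ⟨by omega, fun h => (Nat.not_even_iff_odd.mpr ⟨a, by ring⟩) h⟩
  · intro a ha
    simp only [mem_filter, mem_range] at *
    obtain ⟨h1, h2⟩ := ha
    obtain ⟨c, hc⟩ := Nat.not_even_iff_odd.mp h2
    omega
  · intro a _; omega
  · intro a ha
    simp only [mem_filter, mem_range] at ha
    obtain ⟨h1, h2⟩ := ha
    obtain ⟨c, hc⟩ := Nat.not_even_iff_odd.mp h2
    omega
  · intro a _; ring

lemma icc_shift (n : ℕ) (f : ℕ → ℚ) :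
    ∑ r ∈ Finset.Icc 1 n, f r = ∑ i ∈ Finset.range n, f (i+1) := by
  refine Finset.sum_nbij' (fun r => r - 1) (fun i => i + 1) ?_ ?_ ?_ ?_ ?_
  · intro a ha; simp only [mem_Icc, mem_range] at *; omega
  · intro a ha; simp only [mem_Icc, mem_range] at *; omega
  · intro a ha; simp only [mem_Icc] at ha; omega
  · intro a _; omega
  · intro a ha
    simp only [mem_Icc] at ha
    congr 1
    omega

theorem stmt_2 (n k : ℕ) (hn : 1 ≤ n) (hk : 1 ≤ k) :
    ∑ j ∈ Finset.Icc 1 k, (4 : ℚ) ^ j * (Nat.choose (2 * k + 1) (2 * j)) *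
      (∑ r ∈ Finset.Icc 1 n, (r : ℚ) ^ (2 * j)) =
    ((n : ℚ) + 1 / 2) *
      ∑ j ∈ Finset.Icc 1 k, (4 : ℚ) ^ j * (Nat.choose (2 * k) (2 * j - 1)) *
        (∑ r ∈ Finset.Icc 1 n, (r : ℚ) ^ (2 * j - 1)) := by
  have hins : Finset.range (k+1) = insert 0 (Finset.Icc 1 k) := by
    ext i; simp [Nat.lt_succ_iff]; omega
  -- closed form for LHS inner sum over j, for fixed r
  have hL : ∀ r : ℕ, ∑ j ∈ Finset.Icc 1 k, (4:ℚ)^j * ((2*k+1).choose (2*j) : ℚ) * (r:ℚ)^(2*j)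
      = ((2*(r:ℚ)+1)^(2*k+1) + (1-2*(r:ℚ))^(2*k+1))/2 - 1 := by
    intro r
    have h := sum_even_part k (2*(r:ℚ))
    rw [hins, Finset.sum_insert (by simp)] at h
    have hterm : ∀ j, ((2*k+1).choose (2*j) : ℚ) * (2*(r:ℚ))^(2*j)
        = (4:ℚ)^j * ((2*k+1).choose (2*j) : ℚ) * (r:ℚ)^(2*j) := by
      intro j
      rw [mul_pow, show ((2:ℚ))^(2*j) = 4^j by rw [pow_mul]; norm_num]
      ring
    simp only [hterm] at h
    simp only [Nat.mul_zero, Nat.choose_zero_right, Nat.cast_one, pow_zero, mul_one, one_mul] at h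
    linarith [h]
  -- closed form for RHS inner sum over j, for fixed r
  have hR : ∀ r : ℕ, ∑ j ∈ Finset.Icc 1 k, (4:ℚ)^j * ((2*k).choose (2*j-1) : ℚ) * (r:ℚ)^(2*j-1)
      = (2*(r:ℚ)+1)^(2*k) - (1-2*(r:ℚ))^(2*k) := by
    intro r
    have h := sum_odd_part k (2*(r:ℚ))
    rw [← h, Finset.mul_sum]
    refine Finset.sum_nbij' (fun j => j - 1) (fun j => j + 1) ?_ ?_ ?_ ?_ ?_
    · intro a ha; simp only [mem_Icc, mem_range] at *; omega
    · intro a ha; simp only [mem_Icc, mem_range] at *; omega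
    · intro a ha; simp only [mem_Icc] at ha; omega
    · intro a _; omega
    · intro a ha
      simp only [mem_Icc] at ha
      have e1 : 2 * (a - 1) + 1 = 2 * a - 1 := by omega
      have e2 : (2:ℚ) * 2^(2*a-1) = 4^a := by
        rw [← pow_succ', show 2*a-1+1 = 2*a from by omega, pow_mul]; norm_num
      calc (4:ℚ)^a * ((2*k).choose (2*a-1) : ℚ) * (r:ℚ)^(2*a-1)
          = (2*2^(2*a-1)) * ((2*k).choose (2*a-1):ℚ) * (r:ℚ)^(2*a-1) := by rw [e2]
        _ = 2 * (((2*k).choose (2*(a-1)+1):ℚ) * (2*(r:ℚ))^(2*(a-1)+1)) := by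
            rw [e1, mul_pow]; ring
  -- swap order of summation on both sides
  have swapL : ∑ j ∈ Finset.Icc 1 k, (4:ℚ)^j * ((2*k+1).choose (2*j) : ℚ) *
      (∑ r ∈ Finset.Icc 1 n, (r:ℚ)^(2*j))
      = ∑ r ∈ Finset.Icc 1 n, ∑ j ∈ Finset.Icc 1 k,
          (4:ℚ)^j * ((2*k+1).choose (2*j) : ℚ) * (r:ℚ)^(2*j) := by
    simp_rw [Finset.mul_sum]
    exact Finset.sum_comm
  have swapR : ∑ j ∈ Finset.Icc 1 k, (4:ℚ)^j * ((2*k).choose (2*j-1) : ℚ) *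
      (∑ r ∈ Finset.Icc 1 n, (r:ℚ)^(2*j-1))
      = ∑ r ∈ Finset.Icc 1 n, ∑ j ∈ Finset.Icc 1 k,
          (4:ℚ)^j * ((2*k).choose (2*j-1) : ℚ) * (r:ℚ)^(2*j-1) := by
    simp_rw [Finset.mul_sum]
    exact Finset.sum_comm
  rw [swapL, swapR]
  simp_rw [hL, hR]
  -- telescoping
  have hOdd : Odd (2*k+1) := ⟨k, by ring⟩
  have hEven : Even (2*k) := ⟨k, by ring⟩
  have lhs_eq : ∑ r ∈ Finset.Icc 1 n,
      (((2*(r:ℚ)+1)^(2*k+1) + (1-2*(r:ℚ))^(2*k+1))/2 - 1)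
      = (2*(n:ℚ)+1)^(2*k+1)/2 - 1/2 - n := by
    rw [icc_shift]
    have : ∀ i ∈ Finset.range n,
        (((2*((i:ℚ)+1)+1)^(2*k+1) + (1-2*((i:ℚ)+1))^(2*k+1))/2 - 1)
        = ((fun i : ℕ => (2*(i:ℚ)+1)^(2*k+1)/2) (i+1)
            - (fun i : ℕ => (2*(i:ℚ)+1)^(2*k+1)/2) i) - 1 := by
      intro i _
      dsimp only
      rw [show (1-2*((i:ℚ)+1)) = -(2*(i:ℚ)+1) by ring, hOdd.neg_pow]
      push_cast
      ring
    rw [Finset.sum_congr rfl (fun i hi => by push_cast; exact this i hi),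
        Finset.sum_sub_distrib, Finset.sum_range_sub (fun i : ℕ => (2*(i:ℚ)+1)^(2*k+1)/2)]
    simp
  have rhs_eq : ∑ r ∈ Finset.Icc 1 n,
      ((2*(r:ℚ)+1)^(2*k) - (1-2*(r:ℚ))^(2*k))
      = (2*(n:ℚ)+1)^(2*k) - 1 := by
    rw [icc_shift]
    have : ∀ i ∈ Finset.range n,
        ((2*((i:ℚ)+1)+1)^(2*k) - (1-2*((i:ℚ)+1))^(2*k))
        = ((fun i : ℕ => (2*(i:ℚ)+1)^(2*k)) (i+1)
            - (fun i : ℕ => (2*(i:ℚ)+1)^(2*k)) i) := by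
      intro i _
      dsimp only
      rw [show (1-2*((i:ℚ)+1)) = -(2*(i:ℚ)+1) by ring, hEven.neg_pow]
      push_cast
      ring
    rw [Finset.sum_congr rfl (fun i hi => by push_cast; exact this i hi),
        Finset.sum_range_sub (fun i : ℕ => (2*(i:ℚ)+1)^(2*k))]
    norm_num
  rw [lhs_eq, rhs_eq, pow_succ]
  ring
end

section
/- For every integer n ≥ 1, 9·S_2 + 126·S_4 + 336·S_6 + 144·S_8 = (2n+1)·(S_1 + 28·S_3 + 112·S_5 + 64·S_7), where S_m = Σ_{r=1}^{n} r^m. -/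
private lemma P1 (n : ℕ) : (∑ r ∈ Finset.Icc 1 n, (r:ℚ)^1) = (n*(n+1))/2 := by
  induction n with
  | zero => simp
  | succ m ih =>
    rw [Finset.sum_Icc_succ_top (Nat.succ_le_succ (Nat.zero_le _))]
    push_cast; linear_combination ih

private lemma P2 (n : ℕ) : (∑ r ∈ Finset.Icc 1 n, (r:ℚ)^2) = (n*(n+1)*(2*n+1))/6 := by
  induction n with
  | zero => simp
  | succ m ih =>
    rw [Finset.sum_Icc_succ_top (Nat.succ_le_succ (Nat.zero_le _))]
    push_cast; linear_combination ih

private lemma P3 (n : ℕ) : (∑ r ∈ Finset.Icc 1 n, (r:ℚ)^3) = (n*(n+1))^2/4 := by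
  induction n with
  | zero => simp
  | succ m ih =>
    rw [Finset.sum_Icc_succ_top (Nat.succ_le_succ (Nat.zero_le _))]
    push_cast; linear_combination ih

private lemma P4 (n : ℕ) : (∑ r ∈ Finset.Icc 1 n, (r:ℚ)^4) = (n*(n+1)*(2*n+1)*(3*n^2+3*n-1))/30 := by
  induction n with
  | zero => simp
  | succ m ih =>
    rw [Finset.sum_Icc_succ_top (Nat.succ_le_succ (Nat.zero_le _))]
    push_cast; linear_combination ih

private lemma P5 (n : ℕ) : (∑ r ∈ Finset.Icc 1 n, (r:ℚ)^5) = (n^2*(n+1)^2*(2*n^2+2*n-1))/12 := by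
  induction n with
  | zero => simp
  | succ m ih =>
    rw [Finset.sum_Icc_succ_top (Nat.succ_le_succ (Nat.zero_le _))]
    push_cast; linear_combination ih

private lemma P6 (n : ℕ) : (∑ r ∈ Finset.Icc 1 n, (r:ℚ)^6) = (n*(n+1)*(2*n+1)*(3*n^4+6*n^3-3*n+1))/42 := by
  induction n with
  | zero => simp
  | succ m ih =>
    rw [Finset.sum_Icc_succ_top (Nat.succ_le_succ (Nat.zero_le _))]
    push_cast; linear_combination ih

private lemma P7 (n : ℕ) : (∑ r ∈ Finset.Icc 1 n, (r:ℚ)^7) = (n^2*(n+1)^2*(3*n^4+6*n^3-n^2-4*n+2))/24 := by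
  induction n with
  | zero => simp
  | succ m ih =>
    rw [Finset.sum_Icc_succ_top (Nat.succ_le_succ (Nat.zero_le _))]
    push_cast; linear_combination ih

private lemma P8 (n : ℕ) : (∑ r ∈ Finset.Icc 1 n, (r:ℚ)^8) = (n*(n+1)*(2*n+1)*(5*n^6+15*n^5+5*n^4-15*n^3-n^2+9*n-3))/90 := by
  induction n with
  | zero => simp
  | succ m ih =>
    rw [Finset.sum_Icc_succ_top (Nat.succ_le_succ (Nat.zero_le _))]
    push_cast; linear_combination ih

theorem stmt_3 (n : ℕ) (hn : 1 ≤ n) :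
    9 * (∑ r ∈ Finset.Icc 1 n, (r : ℚ) ^ 2) + 126 * (∑ r ∈ Finset.Icc 1 n, (r : ℚ) ^ 4) +
      336 * (∑ r ∈ Finset.Icc 1 n, (r : ℚ) ^ 6) + 144 * (∑ r ∈ Finset.Icc 1 n, (r : ℚ) ^ 8) =
    (2 * (n : ℚ) + 1) * ((∑ r ∈ Finset.Icc 1 n, (r : ℚ) ^ 1) +
      28 * (∑ r ∈ Finset.Icc 1 n, (r : ℚ) ^ 3) + 112 * (∑ r ∈ Finset.Icc 1 n, (r : ℚ) ^ 5) +
      64 * (∑ r ∈ Finset.Icc 1 n, (r : ℚ) ^ 7)) := by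
  rw [P1, P2, P3, P4, P5, P6, P7, P8]
  ring
end

section
/- For every integer n ≥ 0 and every integer j ≥ 0, the j-th derivative of the Chebyshev polynomial of the second kind U_n evaluated at 1 equals 2^j · j! · C(n + j + 1, 2j + 1). -/
open Polynomial

lemma id_X_mul (j : ℕ) (p : ℚ[X]) :
    derivative^[j+1] (X * p) = X * derivative^[j+1] p + (j+1 : ℚ[X]) * derivative^[j] p := by
  induction j generalizing p with
  | zero => simp [derivative_mul]; ring
  | succ j ih =>
    rw [show j+1+1 = (j+1)+1 from rfl, Function.iterate_succ_apply, derivative_mul,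
      derivative_X, one_mul, iterate_map_add derivative, ih,
      ← Function.iterate_succ_apply derivative (j+1), ← Function.iterate_succ_apply derivative j]
    push_cast
    ring

lemma pascal2 (m k : ℕ) :
    (m+2).choose (k+2) + m.choose (k+2) = 2 * (m+1).choose (k+2) + m.choose k := by
  rw [show m+2 = (m+1)+1 from rfl, Nat.choose_succ_succ' (m+1) (k+1),
    Nat.choose_succ_succ' m k, Nat.choose_succ_succ' m (k+1)]
  ring

lemma key_s8 (n : ℕ) : ∀ j : ℕ,
    (Polynomial.derivative^[j] (Polynomial.Chebyshev.U ℚ (n : ℤ))).eval 1 =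
    2 ^ j * (j.factorial : ℚ) * (Nat.choose (n + j + 1) (2 * j + 1)) := by
  induction n using Nat.twoStepInduction with
  | zero =>
    intro j
    rw [show ((0:ℕ):ℤ) = 0 from rfl, Polynomial.Chebyshev.U_zero]
    cases j with
    | zero => simp
    | succ j =>
      rw [iterate_derivative_one (Nat.succ_pos j),
        Nat.choose_eq_zero_of_lt (by omega)]
      simp
  | one =>
    intro j
    rw [show ((1:ℕ):ℤ) = 1 from rfl, Polynomial.Chebyshev.U_one]
    match j with
    | 0 => simp
    | 1 => norm_num [Function.iterate_one, derivative_mul]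
    | (j+2) =>
      have h2 : (2 : ℚ[X]) * X = ((2:ℕ) : ℚ[X]) * X := by norm_num
      rw [h2, iterate_derivative_natCast_mul, iterate_derivative_X (by omega),
        Nat.choose_eq_zero_of_lt (by omega)]
      simp
  | more n ih1 ih2 =>
    intro j
    have hU : Polynomial.Chebyshev.U ℚ ((n+2:ℕ) : ℤ)
        = 2 * X * Polynomial.Chebyshev.U ℚ ((n+1:ℕ) : ℤ)
          - Polynomial.Chebyshev.U ℚ ((n:ℕ) : ℤ) := by
      push_cast
      exact Polynomial.Chebyshev.U_add_two ℚ n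
    rw [hU, iterate_derivative_sub]
    set p := Polynomial.Chebyshev.U ℚ ((n+1:ℕ) : ℤ) with hp
    have h2 : (2 : ℚ[X]) * X * p = X * (((2:ℕ):ℚ[X]) * p) := by push_cast; ring
    cases j with
    | zero =>
      simp only [Function.iterate_zero, id_eq]
      rw [eval_sub, eval_mul, eval_mul]
      have e1 := ih2 0
      have e0 := ih1 0
      simp only [Function.iterate_zero, id_eq] at e1 e0
      rw [e1, e0]
      have := pascal2 n 0
      simp only [pow_zero, Nat.factorial_zero, Nat.cast_one, one_mul, eval_ofNat, eval_X,
        mul_one, Nat.mul_zero, Nat.zero_add] at *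
      have keyc : ((n+2+0+1).choose (2*0+1) : ℚ) + ((n+0+1).choose (2*0+1) : ℚ)
          = 2 * ((n+1+0+1).choose (2*0+1) : ℚ) := by
        have hnat : (n+2+0+1).choose (2*0+1) + (n+0+1).choose (2*0+1)
            = 2 * (n+1+0+1).choose (2*0+1) := by
          simp [Nat.choose_one_right]; omega
        exact_mod_cast hnat
      linarith [keyc]
    | succ j =>
      rw [h2, id_X_mul, iterate_derivative_natCast_mul, iterate_derivative_natCast_mul]
      rw [eval_sub, eval_add, eval_mul, eval_mul, eval_mul, eval_mul, eval_X, eval_natCast,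
        eval_add, eval_natCast, eval_one]
      rw [ih2 (j+1), ih2 j, ih1 (j+1)]
      have keyn : (n+j+4).choose (2*j+3) + (n+j+2).choose (2*j+3)
          = 2 * (n+j+3).choose (2*j+3) + (n+j+2).choose (2*j+1) := by
        simpa [show n+j+2+2 = n+j+4 from by ring, show n+j+2+1 = n+j+3 from by ring,
          show 2*j+1+2 = 2*j+3 from by ring] using pascal2 (n+j+2) (2*j+1)
      have keyc : (((n+j+4).choose (2*j+3) : ℚ)) + ((n+j+2).choose (2*j+3) : ℚ)
          = 2 * ((n+j+3).choose (2*j+3) : ℚ) + ((n+j+2).choose (2*j+1) : ℚ) := by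
        exact_mod_cast keyn
      have ha : n+1+(j+1)+1 = n+j+3 := by ring
      have hb : n+1+j+1 = n+j+2 := by ring
      have hc : n+(j+1)+1 = n+j+2 := by ring
      have hd : n+2+(j+1)+1 = n+j+4 := by ring
      have he : 2*(j+1)+1 = 2*j+3 := by ring
      rw [ha, hb, hc, hd, he]
      rw [Nat.factorial_succ]
      push_cast
      linear_combination (-(2^(j+1)) * ((j:ℚ)+1) * (j.factorial : ℚ)) * keyc

theorem stmt_8 (n j : ℕ) :
    (Polynomial.derivative^[j] (Polynomial.Chebyshev.U ℚ (n : ℤ))).eval 1 =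
    2 ^ j * (j.factorial : ℚ) * (Nat.choose (n + j + 1) (2 * j + 1)) := by
  exact key_s8 n j
end

section
/- For every integer n ≥ 1, Σ_{r=1}^{n} r^2 = (1/4)·Σ_{j=1}^{n} (−1)^{n+j} · 4^j · j · C(n+j, 2j). -/
open Finset in
private noncomputable def cc (n j : ℕ) : ℚ := (-1)^(n+j) * 4^j * (Nat.choose (n+j) (2*j))

private lemma cc_zero {n j : ℕ} (h : n < j) : cc n j = 0 := by
  have hz : (n+j).choose (2*j) = 0 := Nat.choose_eq_zero_of_lt (by omega)
  simp [cc, hz]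

private lemma cc_rec (n j : ℕ) :
    cc (n+2) (j+1) = 4 * cc (n+1) j - 2 * cc (n+1) (j+1) - cc n (j+1) := by
  have key : (n+2+(j+1)).choose (2*(j+1)) + (n + (j+1)).choose (2*(j+1))
      = (n+1+j).choose (2*j) + 2 * ((n+1+(j+1)).choose (2*(j+1))) := by
    simp only [show n+2+(j+1) = n+j+1+1+1 by omega, show n+1+(j+1) = n+j+1+1 by omega,
      show n+(j+1) = n+j+1 by omega, show n+1+j = n+j+1 by omega,
      show 2*(j+1) = 2*j+1+1 by omega, Nat.choose_succ_succ]
    omega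
  have keyq : ((n+2+(j+1)).choose (2*(j+1)) : ℚ) + (n + (j+1)).choose (2*(j+1))
      = (n+1+j).choose (2*j) + 2 * ((n+1+(j+1)).choose (2*(j+1))) := by exact_mod_cast key
  simp only [cc]
  have s1 : (-1:ℚ)^(n+2+(j+1)) = (-1)^(n+j+1) := by
    rw [show n+2+(j+1) = (n+j+1)+2 by omega, pow_add]; ring
  have s2 : (-1:ℚ)^(n+1+j) = (-1)^(n+j+1) := by rw [show n+1+j = n+j+1 by omega]
  have s3 : (-1:ℚ)^(n+1+(j+1)) = -(-1)^(n+j+1) := by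
    rw [show n+1+(j+1) = (n+j+1)+1 by omega, pow_succ]; ring
  have s4 : (-1:ℚ)^(n+(j+1)) = (-1)^(n+j+1) := by rw [show n+(j+1) = n+j+1 by omega]
  rw [s1, s2, s3, s4, show (4:ℚ)^(j+1) = 4 * 4^j by ring]
  linear_combination (4 * (4:ℚ)^j * (-1:ℚ)^(n+j+1)) * keyq

open Finset in
private noncomputable def G (n : ℕ) : ℚ := ∑ j ∈ range (n+1), cc n j

open Finset in
private noncomputable def H (n : ℕ) : ℚ := ∑ j ∈ range (n+1), (j : ℚ) * cc n j

open Finset in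
private lemma Gext (n N : ℕ) (h : n ≤ N) : ∑ j ∈ range (N+1), cc n j = G n := by
  rw [G]
  refine (Finset.sum_subset (by intro x hx; simp at *; omega) ?_).symm
  intro x hx hnx
  exact cc_zero (by simp at hx hnx; omega)

open Finset in
private lemma Hext (n N : ℕ) (h : n ≤ N) : ∑ j ∈ range (N+1), (j:ℚ) * cc n j = H n := by
  rw [H]
  refine (Finset.sum_subset (by intro x hx; simp at *; omega) ?_).symm
  intro x hx hnx
  rw [cc_zero (by simp at hx hnx; omega)]; ring

private lemma cc_zero_head (n : ℕ) : cc (n+2) 0 = -2 * cc (n+1) 0 - cc n 0 := by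
  simp [cc, pow_succ]; ring

open Finset in
private lemma G_rec (n : ℕ) : G (n+2) = 2 * G (n+1) - G n := by
  have h1 : G (n+2) = (∑ j ∈ range (n+2), cc (n+2) (j+1)) + cc (n+2) 0 := by
    rw [G, Finset.sum_range_succ']
  have h2 : ∑ j ∈ range (n+2), cc (n+2) (j+1)
      = 4 * (∑ j ∈ range (n+2), cc (n+1) j) - 2 * (∑ j ∈ range (n+2), cc (n+1) (j+1))
        - ∑ j ∈ range (n+2), cc n (j+1) := by
    rw [Finset.mul_sum, Finset.mul_sum, ← Finset.sum_sub_distrib, ← Finset.sum_sub_distrib]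
    exact Finset.sum_congr rfl fun j _ => cc_rec n j
  have h3 : ∑ j ∈ range (n+2), cc (n+1) j = G (n+1) := by rw [G]
  have h4 := Finset.sum_range_succ' (cc (n+1)) (n+2)
  rw [Gext (n+1) (n+2) (by omega)] at h4
  have h5 := Finset.sum_range_succ' (cc n) (n+2)
  rw [Gext n (n+2) (by omega)] at h5
  rw [h1, h2, h3, cc_zero_head]
  linarith

open Finset in
private lemma H_rec (n : ℕ) : H (n+2) = 2 * H (n+1) - H n + 4 * G (n+1) := by
  have h1 : H (n+2) = ∑ j ∈ range (n+2), ((j:ℚ)+1) * cc (n+2) (j+1) := by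
    rw [H, Finset.sum_range_succ']
    push_cast; simp
  have h2 : ∑ j ∈ range (n+2), ((j:ℚ)+1) * cc (n+2) (j+1)
      = 4 * (∑ j ∈ range (n+2), ((j:ℚ)+1) * cc (n+1) j)
        - 2 * (∑ j ∈ range (n+2), ((j:ℚ)+1) * cc (n+1) (j+1))
        - ∑ j ∈ range (n+2), ((j:ℚ)+1) * cc n (j+1) := by
    rw [Finset.mul_sum, Finset.mul_sum, ← Finset.sum_sub_distrib, ← Finset.sum_sub_distrib]
    refine Finset.sum_congr rfl fun j _ => ?_
    rw [cc_rec n j]; ring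
  have h3 : ∑ j ∈ range (n+2), ((j:ℚ)+1) * cc (n+1) j = H (n+1) + G (n+1) := by
    rw [H, G, ← Finset.sum_add_distrib]
    exact Finset.sum_congr rfl fun j _ => by ring
  have h4 : ∑ j ∈ range (n+2), ((j:ℚ)+1) * cc (n+1) (j+1) = H (n+1) := by
    have t := Finset.sum_range_succ' (fun j => (j:ℚ) * cc (n+1) j) (n+2)
    rw [Hext (n+1) (n+2) (by omega)] at t
    push_cast at t; simp at t
    exact t.symm
  have h5 : ∑ j ∈ range (n+2), ((j:ℚ)+1) * cc n (j+1) = H n := by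
    have t := Finset.sum_range_succ' (fun j => (j:ℚ) * cc n j) (n+2)
    rw [Hext n (n+2) (by omega)] at t
    push_cast at t; simp at t
    exact t.symm
  rw [h1, h2, h3, h4, h5]; ring

private lemma GH_closed (n : ℕ) :
    (G n = 2*n+1 ∧ H n = 2*n*(n+1)*(2*n+1)/3) := by
  have key : ∀ m : ℕ, (G m = 2*m+1 ∧ H m = 2*m*(m+1)*(2*m+1)/3)
      ∧ (G (m+1) = 2*(m+1)+1 ∧ H (m+1) = 2*(m+1)*((m+1)+1)*(2*(m+1)+1)/3) := by
    intro m
    induction m with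
    | zero =>
      refine ⟨⟨?_, ?_⟩, ?_, ?_⟩ <;>
        norm_num [G, H, cc, Finset.sum_range_succ]
    | succ k ih =>
      obtain ⟨⟨hG0, hH0⟩, hG1, hH1⟩ := ih
      refine ⟨⟨?_, ?_⟩, ?_, ?_⟩
      · rw [hG1]; push_cast; ring
      · rw [hH1]; push_cast; ring
      · rw [G_rec k, hG1, hG0]; push_cast; ring
      · rw [H_rec k, hH1, hH0, hG1]; push_cast; ring
  exact (key n).1

private lemma sq_sum (n : ℕ) :
    (∑ r ∈ Finset.Icc 1 n, (r : ℚ) ^ 2) = n*(n+1)*(2*n+1)/6 := by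
  induction n with
  | zero => simp
  | succ k ih =>
    rw [Finset.sum_Icc_succ_top (by omega : 1 ≤ k+1), ih]
    push_cast; ring

theorem stmt_13 (n : ℕ) (hn : 1 ≤ n) :
    (∑ r ∈ Finset.Icc 1 n, (r : ℚ) ^ 2) =
    (1 / 4) * ∑ j ∈ Finset.Icc 1 n, (-1 : ℚ) ^ (n + j) * 4 ^ j * j *
      (Nat.choose (n + j) (2 * j)) := by
  have hsub : Finset.Icc 1 n ⊆ Finset.range (n+1) := by
    intro x hx
    rw [Finset.mem_Icc] at hx
    rw [Finset.mem_range]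
    omega
  have hR : (∑ j ∈ Finset.Icc 1 n, (-1 : ℚ) ^ (n + j) * 4 ^ j * j *
      (Nat.choose (n + j) (2 * j))) = H n := by
    rw [H]
    refine (Finset.sum_subset hsub ?_).trans ?_
    · intro x hx hnx
      rw [Finset.mem_range] at hx
      rw [Finset.mem_Icc] at hnx
      have hx0 : x = 0 := by omega
      simp [hx0]
    · exact Finset.sum_congr rfl fun j _ => by simp only [cc]; ring
  rw [hR, (GH_closed n).2, sq_sum]
  push_cast; ring
end

section
/- For every integer n ≥ 1, Σ_{r=1}^{n} r^4 = (1/8)·Σ_{j=1}^{n} (−1)^{n+j} · 4^j · j·(3j − 1) · C(n+j, 2j). -/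
open Finset

private def aaS (k n : ℕ) : ℚ :=
  ∑ i ∈ range (n+2), (-1:ℚ)^i * 4^i * (i:ℚ)^k * ((n+i).choose (2*i))

private def bbS (k n : ℕ) : ℚ :=
  ∑ i ∈ range (n+2), (-1:ℚ)^(i+1) * 4^(i+1) * ((i:ℚ)+1)^k * ((n+i+1).choose (2*i+1))

private lemma recA (k n : ℕ) : aaS k (n+1) = aaS k n + bbS k n := by
  have L : aaS k (n+1) =
      (∑ i ∈ range (n+2), (-1:ℚ)^(i+1) * 4^(i+1) * ((i+1:ℕ):ℚ)^k * ((n+1+(i+1)).choose (2*(i+1))))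
      + (-1:ℚ)^0 * 4^0 * ((0:ℕ):ℚ)^k * ((n+1+0).choose (2*0)) := by
    unfold aaS
    exact Finset.sum_range_succ' _ (n+2)
  have R : aaS k n =
      (∑ i ∈ range (n+1), (-1:ℚ)^(i+1) * 4^(i+1) * ((i+1:ℕ):ℚ)^k * ((n+(i+1)).choose (2*(i+1))))
      + (-1:ℚ)^0 * 4^0 * ((0:ℕ):ℚ)^k * ((n+0).choose (2*0)) := by
    unfold aaS
    exact Finset.sum_range_succ' _ (n+1)
  have Rext : (∑ i ∈ range (n+2), (-1:ℚ)^(i+1) * 4^(i+1) * ((i+1:ℕ):ℚ)^k * ((n+(i+1)).choose (2*(i+1))))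
      = ∑ i ∈ range (n+1), (-1:ℚ)^(i+1) * 4^(i+1) * ((i+1:ℕ):ℚ)^k * ((n+(i+1)).choose (2*(i+1))) := by
    rw [Finset.sum_range_succ, Nat.choose_eq_zero_of_lt (show n+(n+1+1) < 2*(n+1+1) by omega)]
    norm_num
  rw [L, R, ← Rext]
  unfold bbS
  rw [show ((∑ i ∈ range (n+2), (-1:ℚ)^(i+1) * 4^(i+1) * ((i+1:ℕ):ℚ)^k * ((n+(i+1)).choose (2*(i+1))))
      + (-1:ℚ)^0 * 4^0 * ((0:ℕ):ℚ)^k * ((n+0).choose (2*0))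
      + ∑ i ∈ range (n+2), (-1:ℚ)^(i+1) * 4^(i+1) * ((i:ℚ)+1)^k * ((n+i+1).choose (2*i+1)))
      = ((∑ i ∈ range (n+2), (-1:ℚ)^(i+1) * 4^(i+1) * ((i+1:ℕ):ℚ)^k * ((n+(i+1)).choose (2*(i+1))))
      + ∑ i ∈ range (n+2), (-1:ℚ)^(i+1) * 4^(i+1) * ((i:ℚ)+1)^k * ((n+i+1).choose (2*i+1)))
      + (-1:ℚ)^0 * 4^0 * ((0:ℕ):ℚ)^k * ((n+0).choose (2*0)) by ring]
  rw [← Finset.sum_add_distrib]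
  congr 1
  · apply Finset.sum_congr rfl
    intro i _
    have hp : (n+1+(i+1)).choose (2*(i+1)) = (n+(i+1)).choose (2*i+1) + (n+(i+1)).choose (2*(i+1)) := by
      rw [show n+1+(i+1) = (n+(i+1))+1 by omega, show 2*(i+1) = (2*i+1)+1 by ring,
        Nat.choose_succ_succ]
    rw [hp, show n+(i+1) = n+i+1 by omega]
    push_cast
    ring
  · simp

private lemma recB (k n : ℕ) : bbS k (n+1) =
    bbS k n + (-4) * ∑ i ∈ range (n+2), (-1:ℚ)^i * 4^i * ((i:ℚ)+1)^k * ((n+1+i).choose (2*i)) := by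
  have L : bbS k (n+1) =
      (∑ i ∈ range (n+2), (-1:ℚ)^(i+1) * 4^(i+1) * ((i:ℚ)+1)^k * ((n+1+i+1).choose (2*i+1)))
      + (-1:ℚ)^((n+2)+1) * 4^((n+2)+1) * ((((n+2):ℕ):ℚ)+1)^k * ((n+1+(n+2)+1).choose (2*(n+2)+1)) := by
    unfold bbS
    exact Finset.sum_range_succ
      (fun i => (-1:ℚ)^(i+1) * 4^(i+1) * ((i:ℚ)+1)^k * ((n+1+i+1).choose (2*i+1))) (n+2)
  have hz : ((n+1+(n+2)+1).choose (2*(n+2)+1)) = 0 :=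
    Nat.choose_eq_zero_of_lt (by omega)
  rw [L, hz, Nat.cast_zero, mul_zero, add_zero]
  unfold bbS
  rw [Finset.mul_sum, ← Finset.sum_add_distrib]
  apply Finset.sum_congr rfl
  intro i _
  have hp : (n+1+i+1).choose (2*i+1) = (n+i+1).choose (2*i) + (n+i+1).choose (2*i+1) := by
    rw [show n+1+i+1 = (n+i+1)+1 by omega]
    exact Nat.choose_succ_succ _ _
  rw [hp, show n+1+i = n+i+1 by omega]
  push_cast
  ring

private lemma ccA (m n : ℕ) :
    (∑ i ∈ range (n+2), (-1:ℚ)^i * 4^i * (i:ℚ)^m * ((n+1+i).choose (2*i))) = aaS m (n+1) := by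
  have L : aaS m (n+1) =
      (∑ i ∈ range (n+2), (-1:ℚ)^i * 4^i * (i:ℚ)^m * ((n+1+i).choose (2*i)))
      + (-1:ℚ)^(n+2) * 4^(n+2) * (((n+2):ℕ):ℚ)^m * ((n+1+(n+2)).choose (2*(n+2))) := by
    unfold aaS
    exact Finset.sum_range_succ _ (n+2)
  rw [L, Nat.choose_eq_zero_of_lt (show n+1+(n+2) < 2*(n+2) by omega)]
  norm_num

private lemma key_s14 (n : ℕ) :
    aaS 0 n = (-1)^n * (2*n+1) ∧
    aaS 1 n = (-1)^n * (4*(n:ℚ)^3+6*n^2+2*n)/3 ∧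
    aaS 2 n = (-1)^n * (8*(n:ℚ)^5+20*n^4+20*n^3+10*n^2+2*n)/15 ∧
    bbS 0 n = -((-1)^n) * (4*n+4) ∧
    bbS 1 n = -((-1)^n) * (8*(n:ℚ)^3+24*n^2+28*n+12)/3 ∧
    bbS 2 n = -((-1)^n) * (16*(n:ℚ)^5+80*n^4+200*n^3+280*n^2+204*n+60)/15 := by
  induction n with
  | zero =>
    norm_num [aaS, bbS, Finset.sum_range_succ]
  | succ n ih =>
    obtain ⟨h0, h1, h2, g0, g1, g2⟩ := ih
    have c0 : (∑ i ∈ range (n+2), (-1:ℚ)^i * 4^i * ((i:ℚ)+1)^0 * ((n+1+i).choose (2*i)))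
        = aaS 0 (n+1) := by
      rw [← ccA 0 n]
      apply Finset.sum_congr rfl; intro i _; ring
    have c1 : (∑ i ∈ range (n+2), (-1:ℚ)^i * 4^i * ((i:ℚ)+1)^1 * ((n+1+i).choose (2*i)))
        = aaS 0 (n+1) + aaS 1 (n+1) := by
      rw [← ccA 0 n, ← ccA 1 n, ← Finset.sum_add_distrib]
      apply Finset.sum_congr rfl; intro i _; ring
    have c2 : (∑ i ∈ range (n+2), (-1:ℚ)^i * 4^i * ((i:ℚ)+1)^2 * ((n+1+i).choose (2*i)))
        = aaS 0 (n+1) + 2 * aaS 1 (n+1) + aaS 2 (n+1) := by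
      rw [← ccA 0 n, ← ccA 1 n, ← ccA 2 n, Finset.mul_sum,
        ← Finset.sum_add_distrib, ← Finset.sum_add_distrib]
      apply Finset.sum_congr rfl; intro i _; ring
    have a0' : aaS 0 (n+1) = (-1)^(n+1) * (2*((n:ℚ)+1)+1) := by
      rw [recA, h0, g0, pow_succ]; ring
    have a1' : aaS 1 (n+1) = (-1)^(n+1) * (4*((n:ℚ)+1)^3+6*((n:ℚ)+1)^2+2*((n:ℚ)+1))/3 := by
      rw [recA, h1, g1, pow_succ]; ring
    have a2' : aaS 2 (n+1) = (-1)^(n+1) * (8*((n:ℚ)+1)^5+20*((n:ℚ)+1)^4+20*((n:ℚ)+1)^3+10*((n:ℚ)+1)^2+2*((n:ℚ)+1))/15 := by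
      rw [recA, h2, g2, pow_succ]; ring
    refine ⟨by rw [a0']; push_cast; ring, by rw [a1']; push_cast; ring,
      by rw [a2']; push_cast; ring, ?_, ?_, ?_⟩
    · rw [recB, c0, a0', g0, pow_succ]; push_cast; ring
    · rw [recB, c1, a0', a1', g1, pow_succ]; push_cast; ring
    · rw [recB, c2, a0', a1', a2', g2, pow_succ]; push_cast; ring

private lemma aaIcc (k n : ℕ) (hk : k ≠ 0) :
    aaS k n = ∑ j ∈ Finset.Icc 1 n, (-1:ℚ)^j * 4^j * (j:ℚ)^k * ((n+j).choose (2*j)) := by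
  have L : aaS k n =
      ((∑ i ∈ range (n+1), (-1:ℚ)^i * 4^i * (i:ℚ)^k * ((n+i).choose (2*i)))
      + (-1:ℚ)^(n+1) * 4^(n+1) * (((n+1):ℕ):ℚ)^k * ((n+(n+1)).choose (2*(n+1)))) := by
    unfold aaS
    exact Finset.sum_range_succ _ (n+1)
  rw [L, Nat.choose_eq_zero_of_lt (show n+(n+1) < 2*(n+1) by omega)]
  rw [Finset.sum_range_succ' _ n]
  have hR : (∑ j ∈ Finset.Icc 1 n, (-1:ℚ)^j * 4^j * (j:ℚ)^k * ((n+j).choose (2*j)))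
      = ∑ i ∈ range (n+1-1), (-1:ℚ)^(1+i) * 4^(1+i) * ((1+i:ℕ):ℚ)^k * ((n+(1+i)).choose (2*(1+i))) := by
    rw [← Finset.Ico_add_one_right_eq_Icc, Finset.sum_Ico_eq_sum_range]
  rw [hR]
  simp only [Nat.add_sub_cancel, Nat.cast_zero, zero_pow hk, mul_zero, zero_mul, add_zero]
  norm_num
  apply Finset.sum_congr rfl
  intro i _
  rw [show 1+i = i+1 by omega]
  ring

private lemma sum4 (n : ℕ) :
    (∑ r ∈ Finset.Icc 1 n, (r:ℚ)^4) = (6*(n:ℚ)^5+15*n^4+10*n^3-n)/30 := by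
  induction n with
  | zero => simp
  | succ n ih =>
    rw [Finset.sum_Icc_succ_top (by omega), ih]
    push_cast
    ring

theorem stmt_14 (n : ℕ) (hn : 1 ≤ n) :
    (∑ r ∈ Finset.Icc 1 n, (r : ℚ) ^ 4) =
    (1 / 8) * ∑ j ∈ Finset.Icc 1 n, (-1 : ℚ) ^ (n + j) * 4 ^ j * j * (3 * j - 1) *
      (Nat.choose (n + j) (2 * j)) := by
  obtain ⟨h0, h1, h2, -, -, -⟩ := key_s14 n
  have e1 := aaIcc 1 n (by norm_num)
  have e2 := aaIcc 2 n (by norm_num)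
  have hsum : (∑ j ∈ Finset.Icc 1 n, (-1 : ℚ) ^ (n + j) * 4 ^ j * j * (3 * j - 1) *
      (Nat.choose (n + j) (2 * j)))
      = (-1:ℚ)^n * (3 * aaS 2 n - aaS 1 n) := by
    rw [e1, e2, Finset.mul_sum, ← Finset.sum_sub_distrib, Finset.mul_sum]
    apply Finset.sum_congr rfl
    intro j _
    rw [pow_add]
    ring
  rw [hsum, h1, h2, sum4]
  rcases Nat.even_or_odd n with h | h
  · rw [h.neg_one_pow]; ring
  · rw [h.neg_one_pow]; ring
end

section
/- For every integer n ≥ 1, Σ_{r=1}^{n} r^6 = (1/16)·Σ_{j=1}^{n} (−1)^{n+j} · 4^j · j·(15j^2 − 15j + 4) · C(n+j, 2j). -/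
open Finset

noncomputable def wq (j : ℕ) : ℚ := (j : ℚ) * (15 * (j : ℚ) ^ 2 - 15 * j + 4)

/-- t(r,j) with r = s+1 : summand of the inner identity -/
noncomputable def tt (s j : ℕ) : ℚ :=
  (-1 : ℚ) ^ (s + 1 + j) * 4 ^ j * wq j *
    (((s + 1 + j).choose (2 * j) : ℚ) + ((s + j).choose (2 * j) : ℚ))

/-- certificate polynomial -/
noncomputable def Pp (r j : ℚ) : ℚ :=
  r * (4 - 11 * j + 10 * j ^ 2 - 3 * j ^ 3)
  + r ^ 2 * (28 - 73 * j + 63 * j ^ 2 - 18 * j ^ 3)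
  + r ^ 3 * (82 - 203 * j + 166 * j ^ 2 - 45 * j ^ 3)
  + r ^ 4 * (126 - 299 * j + 233 * j ^ 2 - 60 * j ^ 3)
  + r ^ 5 * (102 - 237 * j + 180 * j ^ 2 - 45 * j ^ 3)
  + r ^ 6 * (34 - 79 * j + 60 * j ^ 2 - 15 * j ^ 3)

/-- telescoping certificate G(r,j) with r = s+1 -/
noncomputable def gg (s j : ℕ) : ℚ :=
  (-1 : ℚ) ^ (s + 1 + j) * 4 ^ j * Pp ((s : ℚ) + 1) j * ((s + j).choose (2 * j - 2) : ℚ)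

lemma cast_choose_add (a b : ℕ) :
    (((a + b).choose b : ℕ) : ℚ)
      = ((a + b).factorial : ℚ) / ((b.factorial : ℚ) * (a.factorial : ℚ)) := by
  rw [Nat.cast_choose ℚ (Nat.le_add_left b a), Nat.add_sub_cancel]

lemma neg_one_pow_two_mul_add (i d : ℕ) : (-1 : ℚ) ^ (2 * i + d) = (-1) ^ d := by
  rw [pow_add, pow_mul, neg_one_sq, one_pow, one_mul]

/-- the key WZ-style telescoping identity -/
lemma key_s15 (s j : ℕ) (hj : 1 ≤ j) (hjs : j ≤ s + 2) :
    ((s : ℚ) + 2) ^ 6 * tt s j - ((s : ℚ) + 1) ^ 6 * tt (s + 1) j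
      = gg s (j + 1) - gg s j := by
  rcases Nat.lt_or_ge j (s + 1) with hlt | hge
  · -- generic case : 1 ≤ j ≤ s
    obtain ⟨i, rfl⟩ : ∃ i, j = i + 1 := ⟨j - 1, by omega⟩
    obtain ⟨d, rfl⟩ : ∃ d, s = i + d + 1 := ⟨s - i - 1, by omega⟩
    unfold tt gg wq
    simp only [show (i + d + 1) + 1 + (i + 1) = 2 * i + (d + 3) from by ring,
      show (i + d + 1) + (i + 1 + 1) = 2 * i + (d + 3) from by ring,
      show (i + d + 1 + 1) + 1 + (i + 1) = 2 * i + (d + 4) from by ring,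
      show (i + d + 1 + 1) + (i + 1) = 2 * i + (d + 3) from by ring,
      show (i + d + 1) + 1 + (i + 1 + 1) = 2 * i + (d + 4) from by ring,
      show (i + d + 1) + (i + 1) = 2 * i + (d + 2) from by ring,
      show 2 * (i + 1 + 1) - 2 = 2 * (i + 1) from by omega,
      show 2 * (i + 1) - 2 = 2 * i from by omega]
    have hfac : ∀ n : ℕ, ((n.factorial : ℕ) : ℚ) ≠ 0 := fun n => by
      exact_mod_cast n.factorial_ne_zero
    have hc1 : (((2 * i + (d + 2)).choose (2 * (i + 1)) : ℕ) : ℚ)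
        = ((2 * i + d + 2).factorial : ℚ)
          / (((2 * i + 2) * (2 * i + 1) * (2 * i).factorial) * (d.factorial : ℚ)) := by
      rw [show 2 * i + (d + 2) = d + 2 * (i + 1) from by ring, cast_choose_add]
      rw [show 2 * (i + 1) = (2 * i + 1) + 1 from by ring, Nat.factorial_succ,
        Nat.factorial_succ]
      rw [show d + (2 * i + 1 + 1) = 2 * i + d + 2 from by ring]
      push_cast
      ring
    have hc2 : (((2 * i + (d + 3)).choose (2 * (i + 1)) : ℕ) : ℚ)
        = ((2 * i + d + 3) * ((2 * i + d + 2).factorial : ℚ))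
          / (((2 * i + 2) * (2 * i + 1) * (2 * i).factorial)
              * ((d + 1) * (d.factorial : ℚ))) := by
      rw [show 2 * i + (d + 3) = (d + 1) + 2 * (i + 1) from by ring, cast_choose_add]
      rw [show 2 * (i + 1) = (2 * i + 1) + 1 from by ring, Nat.factorial_succ,
        Nat.factorial_succ, Nat.factorial_succ]
      rw [show d + 1 + (2 * i + 1 + 1) = (2 * i + d + 2) + 1 from by ring,
        Nat.factorial_succ]
      push_cast
      ring
    have hc3 : (((2 * i + (d + 4)).choose (2 * (i + 1)) : ℕ) : ℚ)
        = ((2 * i + d + 4) * (2 * i + d + 3) * ((2 * i + d + 2).factorial : ℚ))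
          / (((2 * i + 2) * (2 * i + 1) * (2 * i).factorial)
              * ((d + 2) * (d + 1) * (d.factorial : ℚ))) := by
      rw [show 2 * i + (d + 4) = (d + 2) + 2 * (i + 1) from by ring, cast_choose_add]
      rw [show 2 * (i + 1) = (2 * i + 1) + 1 from by ring, Nat.factorial_succ,
        Nat.factorial_succ, Nat.factorial_succ, Nat.factorial_succ]
      rw [show d + 2 + (2 * i + 1 + 1) = (2 * i + d + 3) + 1 from by ring,
        Nat.factorial_succ, show (2 * i + d + 3) = (2 * i + d + 2) + 1 from by ring,
        Nat.factorial_succ]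
      push_cast
      ring
    have hc4 : (((2 * i + (d + 2)).choose (2 * i) : ℕ) : ℚ)
        = ((2 * i + d + 2).factorial : ℚ)
          / (((2 * i).factorial : ℚ) * ((d + 2) * (d + 1) * (d.factorial : ℚ))) := by
      rw [show 2 * i + (d + 2) = (d + 2) + 2 * i from by ring, cast_choose_add]
      rw [Nat.factorial_succ, show (d + 1) = d + 1 from rfl, Nat.factorial_succ]
      rw [show d + 2 + 2 * i = 2 * i + d + 2 from by ring]
      push_cast
      ring
    rw [hc1, hc2, hc3, hc4]
    simp only [neg_one_pow_two_mul_add]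
    have hA := hfac (2 * i + d + 2)
    have hB := hfac (2 * i)
    have hD := hfac d
    unfold Pp
    push_cast
    field_simp
    ring
  · -- boundary cases j = s + 1 or j = s + 2
    rcases (by omega : j = s + 1 ∨ j = s + 2) with rfl | rfl
    · unfold tt gg wq
      simp only [show s + 1 + (s + 1) = 2 * s + 2 from by omega,
        show s + 1 + 1 + (s + 1) = 2 * s + 3 from by omega,
        show s + 1 + (s + 1 + 1) = 2 * s + 3 from by omega,
        show s + (s + 1) = 2 * s + 1 from by omega,
        show s + (s + 1 + 1) = 2 * s + 2 from by omega,
        show 2 * (s + 1) = 2 * s + 2 from by omega,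
        show 2 * (s + 1 + 1) - 2 = 2 * s + 2 from by omega,
        show 2 * (s + 1) - 2 = 2 * s from by omega,
        show 2 * s + 2 - 2 = 2 * s from by omega]
      rw [show ((2 * s + 2).choose (2 * s + 2)) = 1 from Nat.choose_self _,
        show ((2 * s + 1).choose (2 * s + 2)) = 0 from Nat.choose_eq_zero_of_lt (by omega),
        show ((2 * s + 3).choose (2 * s + 2)) = 2 * s + 3 from Nat.choose_succ_self_right _,
        show ((2 * s + 1).choose (2 * s)) = 2 * s + 1 from Nat.choose_succ_self_right _]
      simp only [show 2 * s + 2 = 2 * (s + 1) from by ring,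
        show 2 * s + 3 = 2 * (s + 1) + 1 from by ring]
      simp only [pow_succ, pow_mul, neg_one_sq, one_pow, one_mul]
      unfold Pp
      push_cast
      ring
    · unfold tt gg wq
      simp only [show s + 1 + (s + 2) = 2 * s + 3 from by omega,
        show s + 1 + 1 + (s + 2) = 2 * s + 4 from by omega,
        show s + 1 + (s + 2 + 1) = 2 * s + 4 from by omega,
        show s + (s + 2) = 2 * s + 2 from by omega,
        show s + (s + 2 + 1) = 2 * s + 3 from by omega,
        show 2 * (s + 2) = 2 * s + 4 from by omega,
        show 2 * (s + 2 + 1) - 2 = 2 * s + 4 from by omega,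
        show 2 * (s + 2) - 2 = 2 * s + 2 from by omega,
        show 2 * s + 4 - 2 = 2 * s + 2 from by omega]
      rw [show ((2 * s + 3).choose (2 * s + 4)) = 0 from Nat.choose_eq_zero_of_lt (by omega),
        show ((2 * s + 2).choose (2 * s + 4)) = 0 from Nat.choose_eq_zero_of_lt (by omega),
        show ((2 * s + 4).choose (2 * s + 4)) = 1 from Nat.choose_self _,
        show ((2 * s + 2).choose (2 * s + 2)) = 1 from Nat.choose_self _]
      simp only [show 2 * s + 3 = 2 * (s + 1) + 1 from by ring,
        show 2 * s + 4 = 2 * (s + 2) from by ring]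
      simp only [pow_succ, pow_mul, neg_one_sq, one_pow, one_mul]
      unfold Pp
      push_cast
      ring

/-- inner identity : ∑_{j=1}^{r} t(r,j) = 16 r^6 with r = s+1 -/
lemma inner (s : ℕ) : ∑ j ∈ Finset.Icc 1 (s + 1), tt s j = 16 * ((s : ℚ) + 1) ^ 6 := by
  induction s with
  | zero =>
      simp [tt, wq]
      norm_num
  | succ s ih =>
      have tele : ((s : ℚ) + 2) ^ 6 * (∑ j ∈ Finset.Icc 1 (s + 2), tt s j)
          - ((s : ℚ) + 1) ^ 6 * (∑ j ∈ Finset.Icc 1 (s + 2), tt (s + 1) j) = 0 := by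
        rw [Finset.mul_sum, Finset.mul_sum, ← Finset.sum_sub_distrib]
        have h1 : ∑ j ∈ Finset.Icc 1 (s + 2),
            (((s : ℚ) + 2) ^ 6 * tt s j - ((s : ℚ) + 1) ^ 6 * tt (s + 1) j)
            = ∑ j ∈ Finset.Icc 1 (s + 2), (gg s (j + 1) - gg s j) :=
          Finset.sum_congr rfl (fun j hj => by
            rw [Finset.mem_Icc] at hj
            exact key_s15 s j hj.1 hj.2)
        rw [h1, ← Finset.Ico_add_one_right_eq_Icc, Finset.sum_Ico_eq_sum_range]
        simp only [show s + 2 + 1 - 1 = s + 2 from by omega, Nat.add_assoc,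
          show s + (2 + 1) - 1 = s + 2 from by omega]
        rw [Finset.sum_range_sub (fun x => gg s (1 + x)) (s + 2)]
        have hgg1 : gg s (1 + 0) = 0 := by
          unfold gg Pp
          ring_nf
        have hgg2 : gg s (1 + (s + 2)) = 0 := by
          unfold gg
          rw [show ((s + (1 + (s + 2))).choose (2 * (1 + (s + 2)) - 2)) = 0 from
            Nat.choose_eq_zero_of_lt (by omega)]
          simp
        rw [hgg1, hgg2]
        ring
      have hlast : tt s (s + 2) = 0 := by
        unfold tt
        rw [show ((s + 1 + (s + 2)).choose (2 * (s + 2))) = 0 from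
          Nat.choose_eq_zero_of_lt (by omega)]
        rw [show ((s + (s + 2)).choose (2 * (s + 2))) = 0 from
          Nat.choose_eq_zero_of_lt (by omega)]
        simp
      have hsplit : ∑ j ∈ Finset.Icc 1 (s + 2), tt s j
          = ∑ j ∈ Finset.Icc 1 (s + 1), tt s j + tt s (s + 2) := by
        rw [show s + 2 = (s + 1) + 1 from rfl,
          Finset.sum_Icc_succ_top (by omega : 1 ≤ s + 2)]
      rw [hsplit, ih, hlast, add_zero] at tele
      have hne : ((s : ℚ) + 1) ^ 6 ≠ 0 := by positivity
      have h2 : ((s : ℚ) + 1) ^ 6 * (∑ j ∈ Finset.Icc 1 (s + 2), tt (s + 1) j)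
          = ((s : ℚ) + 1) ^ 6 * (16 * ((s : ℚ) + 2) ^ 6) := by
        linear_combination -tele
      have h3 := mul_left_cancel₀ hne h2
      rw [show s + 1 + 1 = s + 2 from rfl, h3]
      push_cast
      ring

theorem stmt_15 (n : ℕ) (hn : 1 ≤ n) :
    (∑ r ∈ Finset.Icc 1 n, (r : ℚ) ^ 6) =
    (1 / 16) * ∑ j ∈ Finset.Icc 1 n, (-1 : ℚ) ^ (n + j) * 4 ^ j * j *
      (15 * (j : ℚ) ^ 2 - 15 * j + 4) * (Nat.choose (n + j) (2 * j)) := by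
  obtain ⟨s, rfl⟩ : ∃ s, n = s + 1 := ⟨n - 1, by omega⟩
  clear hn
  induction s with
  | zero =>
      norm_num [wq]
  | succ s ih =>
      have key2 : ∑ j ∈ Finset.Icc 1 (s + 2), (-1 : ℚ) ^ (s + 2 + j) * 4 ^ j * j *
            (15 * (j : ℚ) ^ 2 - 15 * j + 4) * (Nat.choose (s + 2 + j) (2 * j))
          = (∑ j ∈ Finset.Icc 1 (s + 1), (-1 : ℚ) ^ (s + 1 + j) * 4 ^ j * j *
            (15 * (j : ℚ) ^ 2 - 15 * j + 4) * (Nat.choose (s + 1 + j) (2 * j)))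
            + ∑ j ∈ Finset.Icc 1 (s + 2), tt (s + 1) j := by
        have hext : ∑ j ∈ Finset.Icc 1 (s + 1), (-1 : ℚ) ^ (s + 1 + j) * 4 ^ j * j *
              (15 * (j : ℚ) ^ 2 - 15 * j + 4) * (Nat.choose (s + 1 + j) (2 * j))
            = ∑ j ∈ Finset.Icc 1 (s + 2), (-1 : ℚ) ^ (s + 1 + j) * 4 ^ j * j *
              (15 * (j : ℚ) ^ 2 - 15 * j + 4) * (Nat.choose (s + 1 + j) (2 * j)) := by
          rw [show s + 2 = (s + 1) + 1 from rfl,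
            Finset.sum_Icc_succ_top (by omega : 1 ≤ s + 2)]
          rw [show ((s + 1 + (s + 2)).choose (2 * (s + 2))) = 0 from
            Nat.choose_eq_zero_of_lt (by omega)]
          norm_num
        rw [hext, ← Finset.sum_add_distrib]
        refine Finset.sum_congr rfl fun j hj => ?_
        unfold tt wq
        rw [show s + 1 + 1 + j = s + 2 + j from by omega,
          show (s + 1 + 1 + j : ℕ) = (s + 2 + j : ℕ) from by omega]
        have hsgn : (-1 : ℚ) ^ (s + 1 + j) = -(-1 : ℚ) ^ (s + 2 + j) := by
          rw [show s + 2 + j = (s + 1 + j) + 1 from by omega, pow_succ]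
          ring
        rw [hsgn]
        ring
      rw [Finset.sum_Icc_succ_top (by omega : (1:ℕ) ≤ s + 2), ih, key2, _root_.inner (s + 1)]
      push_cast
      ring
end
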